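/- Assume a−b is even and N_{m−1} ≠ 0 (i.e. the associated normalized rank-2 bundle with c_1 = 0 is unstable), and let k = max{ j ∈ ℤ : N_{m−j} ≠ 0 }. Then dim_K N_{m+t} = C(k+t+2, 2) for every integer t < k, where C(n,2) denotes the binomial coefficient (with the convention C(n,2) = 0 for n < 2). -/

import Mathlib

open MvPolynomial

noncomputable section

variable {K : Type*} [Field K]

/-- `p` is homogeneous of (integer) degree `d`; for `d < 0` this forces `p = 0`. -/
def homog (p : MvPolynomial (Fin 3) K) (d : ℤ) : Prop :=
  IsWeightedHomogeneous (fun _ : Fin 3 => (1 : ℤ)) p d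

/-- The degree-`d` graded piece of `⊕_{i=1}^{N} R(-a i)`, as a `K`-subspace of
`Fin N → R`, `R = K[x,y,z]`. -/
def degPiece (N : ℕ) (a : Fin N → ℤ) (d : ℤ) :
    Submodule K (Fin N → MvPolynomial (Fin 3) K) :=
  Submodule.pi Set.univ fun i =>
    weightedHomogeneousSubmodule K (fun _ : Fin 3 => (1 : ℤ)) (d - a i)

lemma mem_degPiece {N : ℕ} {a : Fin N → ℤ} {d : ℤ} {v : Fin N → MvPolynomial (Fin 3) K} :
    v ∈ degPiece (K := K) N a d ↔ ∀ i, homog (v i) (d - a i) := by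
  simp [degPiece, Submodule.mem_pi, mem_weightedHomogeneousSubmodule, homog]

/-- The map `φ : ⊕ R(-a i) → ⊕ R(-b j)` given by the matrix `Φ`, as a `K`-linear map. -/
def phiK (n : ℕ) (Φ : Matrix (Fin n) (Fin (n + 2)) (MvPolynomial (Fin 3) K)) :
    (Fin (n + 2) → MvPolynomial (Fin 3) K) →ₗ[K] (Fin n → MvPolynomial (Fin 3) K) :=
  (Matrix.mulVecLin Φ).restrictScalars K

/-- The degree-`d` graded piece of `N = ker φ`. -/
def Nd (n : ℕ) (a : Fin (n + 2) → ℤ) (Φ : Matrix (Fin n) (Fin (n + 2)) (MvPolynomial (Fin 3) K))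
    (d : ℤ) : Submodule K (Fin (n + 2) → MvPolynomial (Fin 3) K) :=
  degPiece (n + 2) a d ⊓ LinearMap.ker (phiK n Φ)

/-- The image of the degree-`d` piece of `F` inside the degree-`d` piece of `G`,
viewed as a subspace of the latter. -/
def MdSub (n : ℕ) (a : Fin (n + 2) → ℤ) (b : Fin n → ℤ)
    (Φ : Matrix (Fin n) (Fin (n + 2)) (MvPolynomial (Fin 3) K)) (d : ℤ) :
    Submodule K ↥(degPiece (K := K) n b d) :=
  Submodule.comap (degPiece (K := K) n b d).subtype
    (Submodule.map (phiK n Φ) (degPiece (n + 2) a d))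

/-- The degree-`d` graded piece of `M = coker φ`. -/
abbrev Md (n : ℕ) (a : Fin (n + 2) → ℤ) (b : Fin n → ℤ)
    (Φ : Matrix (Fin n) (Fin (n + 2)) (MvPolynomial (Fin 3) K)) (d : ℤ) :=
  ↥(degPiece (K := K) n b d) ⧸ MdSub n a b Φ d

/-- Multiplication by `L` on tuples of polynomials, as a `K`-linear map. -/
def mulL (N : ℕ) (L : MvPolynomial (Fin 3) K) :
    (Fin N → MvPolynomial (Fin 3) K) →ₗ[K] (Fin N → MvPolynomial (Fin 3) K) :=
  ((LinearMap.lsmul (MvPolynomial (Fin 3) K) (Fin N → MvPolynomial (Fin 3) K)) L).restrictScalars K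

lemma mulL_apply {N : ℕ} (L : MvPolynomial (Fin 3) K) (v : Fin N → MvPolynomial (Fin 3) K) :
    mulL N L v = L • v := rfl

lemma mulL_mem {N : ℕ} {a : Fin N → ℤ} {L : MvPolynomial (Fin 3) K} (hL : homog L 1)
    {d : ℤ} {v : Fin N → MvPolynomial (Fin 3) K} (hv : v ∈ degPiece (K := K) N a (d - 1)) :
    mulL N L v ∈ degPiece (K := K) N a d := by
  rw [mem_degPiece] at hv ⊢
  intro i
  have h := hL.mul (hv i)
  have e : (1 : ℤ) + (d - 1 - a i) = d - a i := by ring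
  rw [e] at h
  simpa [mulL_apply, smul_eq_mul, homog] using h

/-- Multiplication by `L` from the degree-`d-1` piece of `G` to the degree-`d` piece. -/
def mulLres (n : ℕ) (b : Fin n → ℤ) (L : MvPolynomial (Fin 3) K) (hL : homog L 1) (d : ℤ) :
    ↥(degPiece (K := K) n b (d - 1)) →ₗ[K] ↥(degPiece (K := K) n b d) :=
  (mulL n L).restrict fun _ hv => mulL_mem hL hv

lemma mulLres_comap (n : ℕ) (a : Fin (n + 2) → ℤ) (b : Fin n → ℤ)
    (Φ : Matrix (Fin n) (Fin (n + 2)) (MvPolynomial (Fin 3) K))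
    (L : MvPolynomial (Fin 3) K) (hL : homog L 1) (d : ℤ) :
    MdSub n a b Φ (d - 1) ≤ Submodule.comap (mulLres n b L hL d) (MdSub n a b Φ d) := by
  rintro ⟨w, hw⟩ hmem
  obtain ⟨v, hv, hφv⟩ := hmem
  refine ⟨mulL (n + 2) L v, mulL_mem hL hv, ?_⟩
  show phiK n Φ (mulL (n + 2) L v) = ((mulLres n b L hL d) ⟨w, hw⟩ : Fin n → MvPolynomial (Fin 3) K)
  have : phiK n Φ (mulL (n + 2) L v) = L • phiK n Φ v := by
    simp [phiK, mulL_apply]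
  rw [this, hφv]
  rfl

/-- The map induced by multiplication by `L` from `M_{d-1}` to `M_d`,
where `M = coker φ`. -/
def mulLmap (n : ℕ) (a : Fin (n + 2) → ℤ) (b : Fin n → ℤ)
    (Φ : Matrix (Fin n) (Fin (n + 2)) (MvPolynomial (Fin 3) K))
    (L : MvPolynomial (Fin 3) K) (hL : homog L 1) (d : ℤ) :
    Md n a b Φ (d - 1) →ₗ[K] Md n a b Φ d :=
  Submodule.mapQ (MdSub n a b Φ (d - 1)) (MdSub n a b Φ d) (mulLres n b L hL d)
    (mulLres_comap n a b Φ L hL d)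

/-- The linear form with coefficient vector `c`. -/
def linform (c : Fin 3 → K) : MvPolynomial (Fin 3) K := ∑ i, C (c i) * X i

lemma homog_linform (c : Fin 3 → K) : homog (linform c) 1 := by
  rw [homog, ← mem_weightedHomogeneousSubmodule]
  refine sum_mem fun i _ => ?_
  rw [mem_weightedHomogeneousSubmodule]
  simpa using (isWeightedHomogeneous_C (fun _ : Fin 3 => (1 : ℤ)) (c i)).mul
    (isWeightedHomogeneous_X K (fun _ : Fin 3 => (1 : ℤ)) i)

/-- Finite length of `coker φ`: all sufficiently high graded pieces vanish. -/
def FiniteColength (n : ℕ) (a : Fin (n + 2) → ℤ) (b : Fin n → ℤ)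
    (Φ : Matrix (Fin n) (Fin (n + 2)) (MvPolynomial (Fin 3) K)) : Prop :=
  ∃ D : ℤ, ∀ d : ℤ, D ≤ d →
    degPiece (K := K) n b d ≤ Submodule.map (phiK n Φ) (degPiece (n + 2) a d)

end
section Part1
open MvPolynomial Finsupp
variable {K : Type*} [Field K]

lemma weight_one_int (f : Fin 3 →₀ ℕ) :
    (Finsupp.weight fun _ : Fin 3 => (1 : ℤ)) f = (f.degree : ℤ) := by
  simp [Finsupp.weight_apply, Finsupp.degree_apply, Finsupp.sum, smul_eq_mul]

lemma homog_iff {p : MvPolynomial (Fin 3) K} {d : ℤ} :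
    homog p d ↔ ∀ m : Fin 3 →₀ ℕ, MvPolynomial.coeff m p ≠ 0 → (m.degree : ℤ) = d := by
  constructor
  · intro h m hm; rw [← weight_one_int]; exact h hm
  · intro h m hm; rw [weight_one_int]; exact h m hm

lemma isHomogeneous_iff' {p : MvPolynomial (Fin 3) K} {c : ℕ} :
    p.IsHomogeneous c ↔ ∀ m : Fin 3 →₀ ℕ, MvPolynomial.coeff m p ≠ 0 → m.degree = c := by
  constructor
  · intro h m hm; have := h hm; rw [Finsupp.degree_eq_weight_one]; exact this
  · intro h m hm; have := h m hm; rw [Finsupp.degree_eq_weight_one] at this; exact this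

lemma homog_iff_cases {p : MvPolynomial (Fin 3) K} {d : ℤ} :
    homog p d ↔ (p = 0 ∨ (0 ≤ d ∧ p.IsHomogeneous d.toNat)) := by
  constructor
  · intro h
    by_cases hp : p = 0
    · exact Or.inl hp
    · right
      obtain ⟨m, hm⟩ := MvPolynomial.ne_zero_iff.mp hp
      have hd : (m.degree : ℤ) = d := homog_iff.mp h m hm
      constructor
      · omega
      · rw [isHomogeneous_iff']
        intro m' hm'
        have := homog_iff.mp h m' hm'
        omega
  · rintro (rfl | ⟨hd, hh⟩)
    · intro m hm; simp at hm
    · rw [homog_iff]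
      intro m hm
      have := isHomogeneous_iff'.mp hh m hm
      omega

lemma homog_of_isHomogeneous {p : MvPolynomial (Fin 3) K} {c : ℕ}
    (h : p.IsHomogeneous c) : homog p (c : ℤ) := by
  rw [homog_iff]
  intro m hm
  exact_mod_cast isHomogeneous_iff'.mp h m hm

end Part1
section Part2
open MvPolynomial
variable {K : Type*} [Field K]

lemma degree_toMultiset_card (f : Fin 3 →₀ ℕ) :
    Multiset.card (Finsupp.toMultiset f) = f.degree := by
  rw [Finsupp.card_toMultiset]
  simp [Finsupp.degree_apply, Finsupp.sum]

noncomputable def degSetEquivSym (c : ℕ) : {m : Fin 3 →₀ ℕ // m.degree = c} ≃ Sym (Fin 3) c where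
  toFun m := ⟨Finsupp.toMultiset m.1, by rw [degree_toMultiset_card]; exact m.2⟩
  invFun s := ⟨Multiset.toFinsupp s.1, by
    rw [← degree_toMultiset_card, Multiset.toFinsupp_toMultiset]; exact s.2⟩
  left_inv m := Subtype.ext (Finsupp.toMultiset_toFinsupp m.1)
  right_inv s := Subtype.ext (Multiset.toFinsupp_toMultiset s.1)

noncomputable instance degSetFintype (c : ℕ) : Fintype {m : Fin 3 →₀ ℕ // m.degree = c} :=
  Fintype.ofEquiv _ (degSetEquivSym c).symm

lemma card_degSet (c : ℕ) :
    Fintype.card {m : Fin 3 →₀ ℕ // m.degree = c} = (c + 2).choose 2 := by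
  rw [Fintype.card_congr (degSetEquivSym c), Sym.card_sym_eq_choose]
  have : Fintype.card (Fin 3) + c - 1 = c + 2 := by simp; omega
  rw [this]
  have h2 : c + 2 - 2 = c := by omega
  rw [← Nat.choose_symm (by omega : 2 ≤ c + 2), h2]

instance fd_homogeneousSubmodule (c : ℕ) :
    FiniteDimensional K (homogeneousSubmodule (Fin 3) K c) := by
  haveI : Fintype ↑{d : Fin 3 →₀ ℕ | d.degree = c} := degSetFintype c
  rw [homogeneousSubmodule_eq_finsupp_supported]
  show FiniteDimensional K (MvPolynomial.restrictSupport K {d | d.degree = c})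
  exact Module.Finite.of_basis (MvPolynomial.basisRestrictSupport K _)

lemma finrank_homogeneousSubmodule (c : ℕ) :
    Module.finrank K (homogeneousSubmodule (Fin 3) K c) = (c + 2).choose 2 := by
  haveI : Fintype ↑{d : Fin 3 →₀ ℕ | d.degree = c} := degSetFintype c
  rw [homogeneousSubmodule_eq_finsupp_supported]
  show Module.finrank K (MvPolynomial.restrictSupport K {d | d.degree = c}) = _
  rw [Module.finrank_eq_card_basis (MvPolynomial.basisRestrictSupport K _)]
  convert card_degSet c using 2
  rfl

lemma whs_eq_of_nonneg {d : ℤ} (hd : 0 ≤ d) :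
    weightedHomogeneousSubmodule K (fun _ : Fin 3 => (1 : ℤ)) d
      = homogeneousSubmodule (Fin 3) K d.toNat := by
  ext p
  rw [mem_weightedHomogeneousSubmodule, mem_homogeneousSubmodule]
  show homog p d ↔ _
  rw [homog_iff_cases]
  constructor
  · rintro (rfl | ⟨-, h⟩)
    · exact isHomogeneous_zero _ _ _
    · exact h
  · intro h; exact Or.inr ⟨hd, h⟩

lemma whs_eq_bot_of_neg {d : ℤ} (hd : d < 0) :
    weightedHomogeneousSubmodule K (fun _ : Fin 3 => (1 : ℤ)) d = ⊥ := by
  ext p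
  rw [mem_weightedHomogeneousSubmodule, Submodule.mem_bot]
  show homog p d ↔ _
  rw [homog_iff_cases]
  constructor
  · rintro (rfl | ⟨h, -⟩); · rfl
    · omega
  · rintro rfl; exact Or.inl rfl

instance fd_whs (d : ℤ) :
    FiniteDimensional K (weightedHomogeneousSubmodule K (fun _ : Fin 3 => (1 : ℤ)) d) := by
  rcases lt_or_ge d 0 with h | h
  · rw [whs_eq_bot_of_neg h]; infer_instance
  · rw [whs_eq_of_nonneg h]; infer_instance

lemma finrank_whs (d : ℤ) :
    Module.finrank K (weightedHomogeneousSubmodule K (fun _ : Fin 3 => (1 : ℤ)) d)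
      = (d + 2).toNat.choose 2 := by
  rcases lt_or_ge d 0 with h | h
  · rw [whs_eq_bot_of_neg h, finrank_bot]
    symm
    apply Nat.choose_eq_zero_of_lt
    omega
  · rw [whs_eq_of_nonneg h, finrank_homogeneousSubmodule]
    congr 1
    omega

noncomputable def degPieceEquiv (N : ℕ) (a : Fin N → ℤ) (d : ℤ) :
    (degPiece (K := K) N a d) ≃ₗ[K]
      Π i, (weightedHomogeneousSubmodule K (fun _ : Fin 3 => (1 : ℤ)) (d - a i)) where
  toFun v := fun i => ⟨v.1 i, v.2 i (Set.mem_univ i)⟩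
  map_add' x y := rfl
  map_smul' c x := rfl
  invFun f := ⟨fun i => (f i).1, fun i _ => (f i).2⟩
  left_inv v := rfl
  right_inv f := rfl

set_option maxHeartbeats 1000000 in
instance fd_degPiece (N : ℕ) (a : Fin N → ℤ) (d : ℤ) :
    FiniteDimensional K (degPiece (K := K) N a d) :=
  Module.Finite.equiv (degPieceEquiv N a d).symm

set_option maxHeartbeats 1600000 in
lemma finrank_degPiece (N : ℕ) (a : Fin N → ℤ) (d : ℤ) :
    Module.finrank K (degPiece (K := K) N a d) = ∑ i, (d - a i + 2).toNat.choose 2 := by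
  rw [LinearEquiv.finrank_eq (degPieceEquiv N a d), Module.finrank_pi_fintype]
  exact Finset.sum_congr rfl fun i _ => finrank_whs _

end Part2
section Part3
set_option maxHeartbeats 1600000
set_option synthInstance.maxHeartbeats 200000
open MvPolynomial
variable {K : Type*} [Field K]

lemma phiK_graded {n : ℕ} {a : Fin (n + 2) → ℤ} {b : Fin n → ℤ}
    {Φ : Matrix (Fin n) (Fin (n + 2)) (MvPolynomial (Fin 3) K)}
    (hΦ : ∀ j i, homog (Φ j i) (a i - b j)) {d : ℤ}
    {v : Fin (n + 2) → MvPolynomial (Fin 3) K} (hv : v ∈ degPiece (K := K) (n + 2) a d) :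
    phiK n Φ v ∈ degPiece (K := K) n b d := by
  rw [mem_degPiece] at hv ⊢
  intro j
  show homog (∑ i, Φ j i * v i) (d - b j)
  unfold homog
  rw [← mem_weightedHomogeneousSubmodule]
  refine sum_mem fun i _ => ?_
  rw [mem_weightedHomogeneousSubmodule]
  have h := (hΦ j i).mul (hv i)
  have e : (a i - b j) + (d - a i) = d - b j := by ring
  rwa [e] at h

noncomputable def psiMap (n : ℕ) (a : Fin (n + 2) → ℤ) (b : Fin n → ℤ)
    (Φ : Matrix (Fin n) (Fin (n + 2)) (MvPolynomial (Fin 3) K))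
    (hΦ : ∀ j i, homog (Φ j i) (a i - b j)) (d : ℤ) :
    (degPiece (K := K) (n + 2) a d) →ₗ[K] (degPiece (K := K) n b d) :=
  LinearMap.codRestrict _ ((phiK n Φ).domRestrict _) fun v => phiK_graded hΦ v.2

noncomputable def kerPsiEquiv (n : ℕ) (a : Fin (n + 2) → ℤ) (b : Fin n → ℤ)
    (Φ : Matrix (Fin n) (Fin (n + 2)) (MvPolynomial (Fin 3) K))
    (hΦ : ∀ j i, homog (Φ j i) (a i - b j)) (d : ℤ) :
    (LinearMap.ker (psiMap n a b Φ hΦ d)) ≃ₗ[K] (Nd n a Φ d) where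
  toFun x := ⟨x.1.1, x.1.2, by
    have hx := x.2
    rw [LinearMap.mem_ker] at hx
    have : phiK n Φ x.1.1 = 0 := congrArg Subtype.val hx
    exact this⟩
  map_add' x y := rfl
  map_smul' c x := rfl
  invFun y := ⟨⟨y.1, y.2.1⟩, by
    rw [LinearMap.mem_ker]
    exact Subtype.ext y.2.2⟩
  left_inv x := rfl
  right_inv y := rfl

instance fd_Nd (n : ℕ) (a : Fin (n + 2) → ℤ)
    (Φ : Matrix (Fin n) (Fin (n + 2)) (MvPolynomial (Fin 3) K)) (d : ℤ) :
    FiniteDimensional K (Nd n a Φ d) :=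
  Submodule.finiteDimensional_of_le (inf_le_left : Nd n a Φ d ≤ degPiece (n + 2) a d)

lemma finrank_Nd_add {n : ℕ} {a : Fin (n + 2) → ℤ} {b : Fin n → ℤ}
    {Φ : Matrix (Fin n) (Fin (n + 2)) (MvPolynomial (Fin 3) K)}
    (hΦ : ∀ j i, homog (Φ j i) (a i - b j)) {d : ℤ}
    (hd : degPiece (K := K) n b d ≤ Submodule.map (phiK n Φ) (degPiece (n + 2) a d)) :
    Module.finrank K (Nd n a Φ d) + ∑ j, (d - b j + 2).toNat.choose 2
      = ∑ i, (d - a i + 2).toNat.choose 2 := by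
  have hsurj : Function.Surjective (psiMap n a b Φ hΦ d) := by
    rintro ⟨w, hw⟩
    obtain ⟨v, hv, hvw⟩ := hd hw
    exact ⟨⟨v, hv⟩, Subtype.ext hvw⟩
  have h1 := LinearMap.finrank_range_add_finrank_ker (psiMap n a b Φ hΦ d)
  rw [LinearMap.range_eq_top.mpr hsurj, finrank_top] at h1
  have h2 : Module.finrank K (LinearMap.ker (psiMap n a b Φ hΦ d))
      = Module.finrank K (Nd n a Φ d) :=
    LinearEquiv.finrank_eq (kerPsiEquiv n a b Φ hΦ d)
  have hA := finrank_degPiece (K := K) (n + 2) a d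
  have hB := finrank_degPiece (K := K) n b d
  rw [h2, hA, hB] at h1
  omega

end Part3
section Part4
set_option maxHeartbeats 1600000
open MvPolynomial
variable {K : Type*} [Field K]

lemma smul_mem_degPiece' {N : ℕ} {a : Fin N → ℤ} {f : MvPolynomial (Fin 3) K} {e d : ℤ}
    (hf : homog f e) {v : Fin N → MvPolynomial (Fin 3) K}
    (hv : v ∈ degPiece (K := K) N a d) :
    f • v ∈ degPiece (K := K) N a (e + d) := by
  rw [mem_degPiece] at hv ⊢
  intro i
  have h := hf.mul (hv i)
  have he : e + (d - a i) = (e + d) - a i := by ring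
  rw [he] at h
  show homog ((f • v) i) _
  simpa [smul_eq_mul, homog] using h

lemma smul_vec_eq_zero {N : ℕ} {f : MvPolynomial (Fin 3) K}
    {v : Fin N → MvPolynomial (Fin 3) K} (h : f • v = 0) (hv : v ≠ 0) : f = 0 := by
  obtain ⟨i, hi⟩ := Function.ne_iff.mp hv
  have : f * v i = 0 := congrFun h i
  rcases mul_eq_zero.mp this with h' | h'
  · exact h'
  · exact absurd h' hi

lemma phiK_smul (n : ℕ) (Φ : Matrix (Fin n) (Fin (n + 2)) (MvPolynomial (Fin 3) K))
    (f : MvPolynomial (Fin 3) K) (v : Fin (n + 2) → MvPolynomial (Fin 3) K) :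
    phiK n Φ (f • v) = f • phiK n Φ v :=
  (Matrix.mulVecLin Φ).map_smul f v

lemma two_cc {e : ℤ} (he : 0 ≤ e) :
    ((e + 2).toNat.choose 2 : ℤ) * 2 = (e + 2) * (e + 1) := by
  obtain ⟨c, rfl⟩ : ∃ c : ℕ, e = (c : ℤ) := ⟨e.toNat, (Int.toNat_of_nonneg he).symm⟩
  have h1 : ((c : ℤ) + 2).toNat = c + 2 := by omega
  rw [h1]
  have h4 : c + 2 - 1 = c + 1 := rfl
  have h2 : (c + 2).choose 2 * 2 = (c + 2) * (c + 1) := by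
    rw [Nat.choose_two_right, h4]
    have hdvd : 2 ∣ (c + 2) * (c + 1) := by
      have := Nat.even_mul_succ_self (c + 1)
      rw [mul_comm]
      exact this.two_dvd
    rw [Nat.div_mul_cancel hdvd]
  exact_mod_cast h2

/-- The injection `(f,g) ↦ f•s + g•u` gives a lower bound for `dim N_d`. -/
lemma finrank_lower_bound {n : ℕ} {a : Fin (n + 2) → ℤ}
    {Φ : Matrix (Fin n) (Fin (n + 2)) (MvPolynomial (Fin 3) K)}
    {ds du : ℤ} {s u : Fin (n + 2) → MvPolynomial (Fin 3) K}
    (hs : s ∈ Nd n a Φ ds) (hs0 : s ≠ 0) (hu : u ∈ Nd n a Φ du)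
    (hindep : ∀ f g : MvPolynomial (Fin 3) K, g • u = f • s → g = 0) (d : ℤ) :
    (d - ds + 2).toNat.choose 2 + (d - du + 2).toNat.choose 2
      ≤ Module.finrank K (Nd n a Φ d) := by
  classical
  set W1 := weightedHomogeneousSubmodule K (fun _ : Fin 3 => (1 : ℤ)) (d - ds)
  set W2 := weightedHomogeneousSubmodule K (fun _ : Fin 3 => (1 : ℤ)) (d - du)
  have hmem : ∀ p : W1 × W2, p.1.1 • s + p.2.1 • u ∈ Nd n a Φ d := by
    rintro ⟨⟨f, hf⟩, ⟨g, hg⟩⟩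
    have h1 := smul_mem_degPiece' (a := a) hf hs.1
    have h2 := smul_mem_degPiece' (a := a) hg hu.1
    have e1 : (d - ds) + ds = d := by ring
    have e2 : (d - du) + du = d := by ring
    rw [e1] at h1; rw [e2] at h2
    have hker : phiK n Φ (f • s + g • u) = 0 := by
      rw [map_add, phiK_smul, phiK_smul,
        LinearMap.mem_ker.mp hs.2, LinearMap.mem_ker.mp hu.2]
      simp
    exact Submodule.mem_inf.mpr ⟨add_mem h1 h2, LinearMap.mem_ker.mpr hker⟩
  let θ0 : (W1 × W2) →ₗ[K] (Fin (n + 2) → MvPolynomial (Fin 3) K) :=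
    { toFun := fun p => p.1.1 • s + p.2.1 • u
      map_add' := fun p q => by
        simp only [Prod.fst_add, Prod.snd_add, Submodule.coe_add, add_smul]
        abel
      map_smul' := fun c p => by
        simp only [Prod.smul_fst, Prod.smul_snd, Submodule.coe_smul, smul_assoc, smul_add,
          RingHom.id_apply] }
  let θ : (W1 × W2) →ₗ[K] (Nd n a Φ d) := θ0.codRestrict _ hmem
  have hinj : Function.Injective θ := by
    rw [← LinearMap.ker_eq_bot, LinearMap.ker_eq_bot']
    rintro ⟨⟨f, hf⟩, ⟨g, hg⟩⟩ hp
    have h0 : f • s + g • u = 0 := congrArg Subtype.val hp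
    have hgu : g • u = (-f) • s := by
      rw [neg_smul]
      exact eq_neg_of_add_eq_zero_left (by linear_combination (norm := abel) h0)
    have hg0 : g = 0 := hindep (-f) g hgu
    have hss : f • s = 0 := by
      have : f • s + (0 : MvPolynomial (Fin 3) K) • u = 0 := by rw [← hg0]; exact h0
      simpa using this
    have hf0 : f = 0 := smul_vec_eq_zero hss hs0
    simp only [Prod.mk_eq_zero]
    exact ⟨Subtype.ext hf0, Subtype.ext hg0⟩
  have hle := LinearMap.finrank_le_finrank_of_injective hinj
  rw [Module.finrank_prod] at hle
  rw [finrank_whs, finrank_whs] at hle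
  exact hle

end Part4
section Part5
set_option maxHeartbeats 1600000
open MvPolynomial
variable {K : Type*} [Field K]

lemma sum_two_cc {M : ℕ} (c : Fin M → ℤ) (d : ℤ) (hc : ∀ i, c i ≤ d) :
    ((∑ i, (d - c i + 2).toNat.choose 2 : ℕ) : ℤ) * 2
      = (∑ i, (c i)^2) - (2*d+3) * (∑ i, c i) + (M : ℤ) * (d^2+3*d+2) := by
  push_cast
  rw [Finset.sum_mul]
  have h : ∀ i ∈ Finset.univ, ((d - c i + 2).toNat.choose 2 : ℤ) * 2
      = (c i)^2 - (2*d+3)*(c i) + (d^2+3*d+2) := fun i _ => by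
    rw [two_cc (by have := hc i; omega)]
    ring
  rw [Finset.sum_congr rfl h, Finset.sum_add_distrib, Finset.sum_sub_distrib,
    ← Finset.mul_sum, Finset.sum_const, Finset.card_univ, Fintype.card_fin]
  push_cast
  ring

lemma exists_dependence {n : ℕ} {a : Fin (n + 2) → ℤ} {b : Fin n → ℤ}
    {Φ : Matrix (Fin n) (Fin (n + 2)) (MvPolynomial (Fin 3) K)}
    (hΦ : ∀ j i, homog (Φ j i) (a i - b j)) (hfin : FiniteColength n a b Φ)
    {m k t : ℤ} (hm : (∑ i, a i) - (∑ j, b j) = 2 * m) (htk : t < k)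
    {s u : Fin (n + 2) → MvPolynomial (Fin 3) K}
    (hs : s ∈ Nd n a Φ (m - k)) (hs0 : s ≠ 0) (hu : u ∈ Nd n a Φ (m + t)) :
    ∃ f g : MvPolynomial (Fin 3) K, g ≠ 0 ∧ g • u = f • s := by
  by_contra hno
  push_neg at hno
  have hindep : ∀ f g : MvPolynomial (Fin 3) K, g • u = f • s → g = 0 := by
    intro f g hgu
    by_contra hg
    exact hno f g hg hgu
  obtain ⟨D, hD⟩ := hfin
  set C0 : ℤ := (∑ i, (a i)^2) - (∑ j, (b j)^2) - (m-k)^2 - (m+t)^2 with hC0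
  set d : ℤ := |D| + (∑ i, |a i|) + (∑ j, |b j|) + |m| + |k| + |t| + |C0| + 2 with hd
  have h1 : (0:ℤ) ≤ ∑ i, |a i| := Finset.sum_nonneg fun i _ => abs_nonneg _
  have h2 : (0:ℤ) ≤ ∑ j, |b j| := Finset.sum_nonneg fun j _ => abs_nonneg _
  have hDabs := le_abs_self D
  have hD0 := abs_nonneg D
  have hmabs := le_abs_self m
  have hm0 := abs_nonneg m
  have hkabs := le_abs_self k
  have hk0 := abs_nonneg k
  have htabs := le_abs_self t
  have ht0 := abs_nonneg t
  have hkneg := neg_abs_le k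
  have htneg := neg_abs_le t
  have hC0abs := le_abs_self C0
  have hC00 := abs_nonneg C0
  have hdD : D ≤ d := by rw [hd]; linarith
  have hd2 : 2 ≤ d := by rw [hd]; linarith
  have hda : ∀ i, a i ≤ d := by
    intro i
    have hle : a i ≤ |a i| := le_abs_self _
    have hsum : |a i| ≤ ∑ i', |a i'| :=
      Finset.single_le_sum (fun i' _ => abs_nonneg (a i')) (Finset.mem_univ i)
    rw [hd]; linarith
  have hdb : ∀ j, b j ≤ d := by
    intro j
    have hle : b j ≤ |b j| := le_abs_self _
    have hsum : |b j| ≤ ∑ j', |b j'| :=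
      Finset.single_le_sum (fun j' _ => abs_nonneg (b j')) (Finset.mem_univ j)
    rw [hd]; linarith
  have hmk : (0:ℤ) ≤ d - (m - k) := by rw [hd]; linarith
  have hmt : (0:ℤ) ≤ d - (m + t) := by rw [hd]; linarith
  have hCd : C0 ≤ d - 2 := by rw [hd]; linarith
  have hrank := finrank_Nd_add hΦ (hD d hdD)
  have hlow := finrank_lower_bound hs hs0 hu hindep d
  have hrankZ : (Module.finrank K (Nd n a Φ d) : ℤ)
      + ((∑ j, (d - b j + 2).toNat.choose 2 : ℕ) : ℤ)
      = ((∑ i, (d - a i + 2).toNat.choose 2 : ℕ) : ℤ) := by exact_mod_cast hrank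
  have hlowZ : ((d - (m - k) + 2).toNat.choose 2 : ℤ) + ((d - (m + t) + 2).toNat.choose 2 : ℤ)
      ≤ (Module.finrank K (Nd n a Φ d) : ℤ) := by exact_mod_cast hlow
  have hA := sum_two_cc a d hda
  have hB := sum_two_cc b d hdb
  have hk1 := two_cc hmk
  have ht1 := two_cc hmt
  have key : ((∑ i, (a i)^2) - (2*d+3)*(∑ i, a i) + (((n+2 : ℕ)):ℤ)*(d^2+3*d+2))
      - ((∑ j, (b j)^2) - (2*d+3)*(∑ j, b j) + (n:ℤ)*(d^2+3*d+2))
      - ((d-(m-k)+2)*(d-(m-k)+1) + (d-(m+t)+2)*(d-(m+t)+1))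
      = (2*d+3)*(t-k) + C0 := by
    have hsa : (∑ i, a i) = (∑ j, b j) + 2*m := by linarith
    rw [hC0, hsa]; push_cast; ring
  have hmul : (2*d+3)*(t-k) ≤ (2*d+3)*(-1) :=
    mul_le_mul_of_nonneg_left (by omega) (by linarith)
  linarith [hA, hB, hk1, ht1, hrankZ, hlowZ, key, hmul]

end Part5
section Part6
set_option maxHeartbeats 1600000
open MvPolynomial
variable {K : Type*} [Field K]

lemma degree_add' (u v : Fin 3 →₀ ℕ) : (u + v).degree = u.degree + v.degree := by
  simp [Finsupp.degree_eq_weight_one, map_add]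

/-- The set of degrees occurring in `p`. -/
noncomputable def degs (p : MvPolynomial (Fin 3) K) : Finset ℕ :=
  p.support.image Finsupp.degree

@[simp] lemma degs_def (p : MvPolynomial (Fin 3) K) :
    degs p = p.support.image Finsupp.degree := rfl

lemma degs_nonempty {p : MvPolynomial (Fin 3) K} (hp : p ≠ 0) : (degs p).Nonempty := by
  rw [degs_def, Finset.image_nonempty, MvPolynomial.support_nonempty]
  exact hp

lemma min_le_of_coeff {p : MvPolynomial (Fin 3) K} (hp : p ≠ 0) {u : Fin 3 →₀ ℕ}
    (hu : MvPolynomial.coeff u p ≠ 0) : (degs p).min' (degs_nonempty hp) ≤ u.degree :=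
  Finset.min'_le _ _ (Finset.mem_image_of_mem _ (MvPolynomial.mem_support_iff.mpr hu))

lemma le_max_of_coeff {p : MvPolynomial (Fin 3) K} (hp : p ≠ 0) {u : Fin 3 →₀ ℕ}
    (hu : MvPolynomial.coeff u p ≠ 0) : u.degree ≤ (degs p).max' (degs_nonempty hp) :=
  Finset.le_max' _ _ (Finset.mem_image_of_mem _ (MvPolynomial.mem_support_iff.mpr hu))

lemma comp_min_ne_zero {p : MvPolynomial (Fin 3) K} (hp : p ≠ 0) :
    homogeneousComponent ((degs p).min' (degs_nonempty hp)) p ≠ 0 := by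
  have hmem := (degs p).min'_mem (degs_nonempty hp)
  obtain ⟨u, hu, hud⟩ := Finset.mem_image.mp hmem
  intro h0
  have := coeff_homogeneousComponent ((degs p).min' (degs_nonempty hp)) p u
  rw [h0, MvPolynomial.coeff_zero, if_pos hud] at this
  exact MvPolynomial.mem_support_iff.mp hu this.symm

lemma comp_max_ne_zero {p : MvPolynomial (Fin 3) K} (hp : p ≠ 0) :
    homogeneousComponent ((degs p).max' (degs_nonempty hp)) p ≠ 0 := by
  have hmem := (degs p).max'_mem (degs_nonempty hp)
  obtain ⟨u, hu, hud⟩ := Finset.mem_image.mp hmem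
  intro h0
  have := coeff_homogeneousComponent ((degs p).max' (degs_nonempty hp)) p u
  rw [h0, MvPolynomial.coeff_zero, if_pos hud] at this
  exact MvPolynomial.mem_support_iff.mp hu this.symm

lemma comp_min_mul {p q : MvPolynomial (Fin 3) K} (hp : p ≠ 0) (hq : q ≠ 0) :
    homogeneousComponent ((degs p).min' (degs_nonempty hp) + (degs q).min' (degs_nonempty hq))
        (p * q)
      = homogeneousComponent ((degs p).min' (degs_nonempty hp)) p
        * homogeneousComponent ((degs q).min' (degs_nonempty hq)) q := by
  classical
  set bp := (degs p).min' (degs_nonempty hp)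
  set bq := (degs q).min' (degs_nonempty hq)
  ext dd
  rw [coeff_homogeneousComponent, MvPolynomial.coeff_mul, MvPolynomial.coeff_mul]
  by_cases hdd : dd.degree = bp + bq
  · rw [if_pos hdd]
    apply Finset.sum_congr rfl
    rintro ⟨u, v⟩ huv
    rw [Finset.HasAntidiagonal.mem_antidiagonal] at huv
    rw [coeff_homogeneousComponent, coeff_homogeneousComponent]
    by_cases hcu : MvPolynomial.coeff u p = 0
    · rw [hcu, zero_mul]
      split_ifs with h1 h2 <;> simp [hcu]
    by_cases hcv : MvPolynomial.coeff v q = 0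
    · rw [hcv, mul_zero]
      split_ifs with h1 h2 <;> simp [hcv]
    have hu1 : bp ≤ u.degree := min_le_of_coeff hp hcu
    have hv1 : bq ≤ v.degree := min_le_of_coeff hq hcv
    have hsum : u.degree + v.degree = bp + bq := by
      rw [← degree_add', huv, hdd]
    have hu2 : u.degree = bp := by omega
    have hv2 : v.degree = bq := by omega
    rw [if_pos hu2, if_pos hv2]
  · rw [if_neg hdd]
    symm
    apply Finset.sum_eq_zero
    rintro ⟨u, v⟩ huv
    rw [Finset.HasAntidiagonal.mem_antidiagonal] at huv
    rw [coeff_homogeneousComponent, coeff_homogeneousComponent]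
    split_ifs with h1 h2
    · by_cases hcu : MvPolynomial.coeff u p = 0
      · rw [hcu, zero_mul]
      by_cases hcv : MvPolynomial.coeff v q = 0
      · rw [hcv, mul_zero]
      exfalso
      apply hdd
      rw [← huv, degree_add', h1, h2]
    all_goals simp

lemma comp_max_mul {p q : MvPolynomial (Fin 3) K} (hp : p ≠ 0) (hq : q ≠ 0) :
    homogeneousComponent ((degs p).max' (degs_nonempty hp) + (degs q).max' (degs_nonempty hq))
        (p * q)
      = homogeneousComponent ((degs p).max' (degs_nonempty hp)) p
        * homogeneousComponent ((degs q).max' (degs_nonempty hq)) q := by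
  classical
  set bp := (degs p).max' (degs_nonempty hp)
  set bq := (degs q).max' (degs_nonempty hq)
  ext dd
  rw [coeff_homogeneousComponent, MvPolynomial.coeff_mul, MvPolynomial.coeff_mul]
  by_cases hdd : dd.degree = bp + bq
  · rw [if_pos hdd]
    apply Finset.sum_congr rfl
    rintro ⟨u, v⟩ huv
    rw [Finset.HasAntidiagonal.mem_antidiagonal] at huv
    rw [coeff_homogeneousComponent, coeff_homogeneousComponent]
    by_cases hcu : MvPolynomial.coeff u p = 0
    · rw [hcu, zero_mul]
      split_ifs with h1 h2 <;> simp [hcu]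
    by_cases hcv : MvPolynomial.coeff v q = 0
    · rw [hcv, mul_zero]
      split_ifs with h1 h2 <;> simp [hcv]
    have hu1 : u.degree ≤ bp := le_max_of_coeff hp hcu
    have hv1 : v.degree ≤ bq := le_max_of_coeff hq hcv
    have hsum : u.degree + v.degree = bp + bq := by
      rw [← degree_add', huv, hdd]
    have hu2 : u.degree = bp := by omega
    have hv2 : v.degree = bq := by omega
    rw [if_pos hu2, if_pos hv2]
  · rw [if_neg hdd]
    symm
    apply Finset.sum_eq_zero
    rintro ⟨u, v⟩ huv
    rw [Finset.HasAntidiagonal.mem_antidiagonal] at huv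
    rw [coeff_homogeneousComponent, coeff_homogeneousComponent]
    split_ifs with h1 h2
    · by_cases hcu : MvPolynomial.coeff u p = 0
      · rw [hcu, zero_mul]
      by_cases hcv : MvPolynomial.coeff v q = 0
      · rw [hcv, mul_zero]
      exfalso
      apply hdd
      rw [← huv, degree_add', h1, h2]
    all_goals simp

/-- A factor of a nonzero homogeneous polynomial is homogeneous. -/
lemma isHomogeneous_of_mul {p q : MvPolynomial (Fin 3) K} {n : ℕ}
    (hp : p ≠ 0) (hq : q ≠ 0) (h : (p * q).IsHomogeneous n) :
    ∃ cp cq : ℕ, cp + cq = n ∧ p.IsHomogeneous cp ∧ q.IsHomogeneous cq := by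
  set bp := (degs p).min' (degs_nonempty hp) with hbp
  set bq := (degs q).min' (degs_nonempty hq) with hbq
  set tp := (degs p).max' (degs_nonempty hp) with htp
  set tq := (degs q).max' (degs_nonempty hq) with htq
  have hmin : homogeneousComponent (bp + bq) (p * q)
      = homogeneousComponent bp p * homogeneousComponent bq q := comp_min_mul hp hq
  have hmax : homogeneousComponent (tp + tq) (p * q)
      = homogeneousComponent tp p * homogeneousComponent tq q := comp_max_mul hp hq
  have hminne : homogeneousComponent (bp + bq) (p * q) ≠ 0 := by
    rw [hmin]
    exact mul_ne_zero (comp_min_ne_zero hp) (comp_min_ne_zero hq)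
  have hmaxne : homogeneousComponent (tp + tq) (p * q) ≠ 0 := by
    rw [hmax]
    exact mul_ne_zero (comp_max_ne_zero hp) (comp_max_ne_zero hq)
  have hbn : bp + bq = n := by
    by_contra hne
    apply hminne
    rw [homogeneousComponent_of_mem (mem_homogeneousSubmodule n (p * q) |>.mpr h), if_neg hne]
  have htn : tp + tq = n := by
    by_contra hne
    apply hmaxne
    rw [homogeneousComponent_of_mem (mem_homogeneousSubmodule n (p * q) |>.mpr h), if_neg hne]
  have hple : bp ≤ tp := Finset.min'_le _ _ (Finset.max'_mem _ _)
  have hqle : bq ≤ tq := Finset.min'_le _ _ (Finset.max'_mem _ _)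
  have hpe : bp = tp := by omega
  have hqe : bq = tq := by omega
  refine ⟨bp, bq, hbn, ?_, ?_⟩
  · rw [isHomogeneous_iff']
    intro u hu
    have h1 := min_le_of_coeff hp hu
    have h2 := le_max_of_coeff hp hu
    omega
  · rw [isHomogeneous_iff']
    intro u hu
    have h1 := min_le_of_coeff hq hu
    have h2 := le_max_of_coeff hq hu
    omega

lemma isUnit_of_isHomogeneous_zero {p : MvPolynomial (Fin 3) K}
    (hp : p ≠ 0) (h : p.IsHomogeneous 0) : IsUnit p := by
  have h1 : homogeneousComponent 0 p = p := by
    rw [homogeneousComponent_of_mem ((mem_homogeneousSubmodule 0 p).mpr h), if_pos rfl]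
  have hC : p = C (MvPolynomial.coeff 0 p) := by
    conv_lhs => rw [← h1]
    rw [homogeneousComponent_zero]
  have hc0 : MvPolynomial.coeff 0 p ≠ 0 := fun h0 => hp (by rw [hC, h0, map_zero])
  rw [hC]
  exact (isUnit_iff_ne_zero.mpr hc0).map (MvPolynomial.C : K →+* MvPolynomial (Fin 3) K)

end Part6
section Part7
set_option maxHeartbeats 1600000
open MvPolynomial
variable {K : Type*} [Field K]

lemma homog_nonneg_degree {p : MvPolynomial (Fin 3) K} {d : ℤ} (h : homog p d) (hp : p ≠ 0) :
    0 ≤ d ∧ p.IsHomogeneous d.toNat := by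
  rcases homog_iff_cases.mp h with rfl | hh
  · exact absurd rfl hp
  · exact hh

lemma primitive_step {n : ℕ} {a : Fin (n + 2) → ℤ}
    {Φ : Matrix (Fin n) (Fin (n + 2)) (MvPolynomial (Fin 3) K)} {ds : ℤ}
    {s : Fin (n + 2) → MvPolynomial (Fin 3) K}
    (hs : s ∈ Nd n a Φ ds) (hs0 : s ≠ 0)
    {p : MvPolynomial (Fin 3) K} (hp : Prime p) (hdvd : ∀ i, p ∣ s i) :
    ∃ e : ℕ, 1 ≤ e ∧ Nd n a Φ (ds - e) ≠ ⊥ := by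
  classical
  choose w hw using hdvd
  obtain ⟨i0, hi0⟩ := Function.ne_iff.mp hs0
  have hwi0 : w i0 ≠ 0 := fun h0 => hi0 (by rw [hw i0, h0, mul_zero]; rfl)
  have hsi0 : homog (s i0) (ds - a i0) := mem_degPiece.mp hs.1 i0
  obtain ⟨hd0, hsiH⟩ := homog_nonneg_degree hsi0 hi0
  rw [hw i0] at hsiH
  obtain ⟨cp, cw, hsum, hpH, hwH⟩ := isHomogeneous_of_mul hp.ne_zero hwi0 hsiH
  have hcp1 : 1 ≤ cp := by
    by_contra hc
    have hcp0 : cp = 0 := by omega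
    rw [hcp0] at hpH
    exact hp.not_unit (isUnit_of_isHomogeneous_zero hp.ne_zero hpH)
  refine ⟨cp, hcp1, ?_⟩
  rw [Submodule.ne_bot_iff]
  refine ⟨w, Submodule.mem_inf.mpr ⟨?_, ?_⟩, fun h0 => hwi0 (congrFun h0 i0)⟩
  · rw [mem_degPiece]
    intro i
    by_cases hwi : w i = 0
    · rw [hwi, homog_iff_cases]
      exact Or.inl rfl
    · have hsi : s i ≠ 0 := by
        rw [hw i]
        exact mul_ne_zero hp.ne_zero hwi
      have hsih : homog (s i) (ds - a i) := mem_degPiece.mp hs.1 i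
      obtain ⟨hd0i, hsiHi⟩ := homog_nonneg_degree hsih hsi
      rw [hw i] at hsiHi
      obtain ⟨cp', cw', hsum', hpH', hwH'⟩ := isHomogeneous_of_mul hp.ne_zero hwi hsiHi
      have hcpe : cp' = cp := hpH'.inj_right hpH hp.ne_zero
      rw [homog_iff_cases]
      right
      refine ⟨by omega, ?_⟩
      have ht : ((ds - (cp : ℤ)) - a i).toNat = cw' := by omega
      rw [ht]
      exact hwH'
  · rw [LinearMap.mem_ker]
    have hsw : s = p • w := funext fun i => hw i
    have h1 : phiK n Φ s = 0 := LinearMap.mem_ker.mp hs.2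
    rw [hsw, phiK_smul] at h1
    funext j
    have h2 : p * (phiK n Φ w j) = 0 := congrFun h1 j
    have := mul_eq_zero.mp h2
    simpa using this.resolve_left hp.ne_zero

lemma eq_smul_of_rel {n : ℕ} {a : Fin (n + 2) → ℤ}
    {Φ : Matrix (Fin n) (Fin (n + 2)) (MvPolynomial (Fin 3) K)} {m k : ℤ}
    (hk₂ : ∀ j : ℤ, Nd n a Φ (m - j) ≠ ⊥ → j ≤ k)
    {s : Fin (n + 2) → MvPolynomial (Fin 3) K}
    (hs : s ∈ Nd n a Φ (m - k)) (hs0 : s ≠ 0)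
    (g : MvPolynomial (Fin 3) K) :
    ∀ (f : MvPolynomial (Fin 3) K) (u : Fin (n + 2) → MvPolynomial (Fin 3) K),
      g ≠ 0 → g • u = f • s → ∃ h : MvPolynomial (Fin 3) K, u = h • s := by
  induction g using UniqueFactorizationMonoid.induction_on_prime with
  | h₁ =>
    intro f u hg _
    exact absurd rfl hg
  | h₂ x hx =>
    intro f u _ hgu
    obtain ⟨c, hc⟩ := hx.exists_left_inv
    refine ⟨c * f, ?_⟩
    calc u = (c * x) • u := by rw [hc, one_smul]
    _ = c • (x • u) := by rw [smul_smul]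
    _ = c • (f • s) := by rw [hgu]
    _ = (c * f) • s := by rw [smul_smul]
  | h₃ g₀ p hg₀ hp ih =>
    intro f u _ hgu
    by_cases hpf : p ∣ f
    · obtain ⟨f₀, rfl⟩ := hpf
      apply ih f₀ u hg₀
      funext i
      have h1 : (p * g₀) * u i = (p * f₀) * s i := congrFun hgu i
      have h2 : p * (g₀ * u i) = p * (f₀ * s i) := by
        rw [← mul_assoc, ← mul_assoc]
        exact h1
      exact mul_left_cancel₀ hp.ne_zero h2
    · exfalso
      have hdvd : ∀ i, p ∣ s i := by
        intro i
        have h1 : (p * g₀) * u i = f * s i := congrFun hgu i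
        have h2 : p ∣ f * s i := ⟨g₀ * u i, by rw [← h1]; ring⟩
        exact (hp.2.2 f (s i) h2).resolve_left hpf
      obtain ⟨e, he1, hbot⟩ := primitive_step hs hs0 hp hdvd
      have heq : m - k - (e : ℤ) = m - (k + e) := by ring
      rw [heq] at hbot
      have := hk₂ (k + e) hbot
      omega

lemma final_count {n : ℕ} {a : Fin (n + 2) → ℤ} {b : Fin n → ℤ}
    {Φ : Matrix (Fin n) (Fin (n + 2)) (MvPolynomial (Fin 3) K)}
    (hΦ : ∀ j i, homog (Φ j i) (a i - b j)) (hfin : FiniteColength n a b Φ)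
    {m k : ℤ} (hm : (∑ i, a i) - (∑ j, b j) = 2 * m)
    (hk₂ : ∀ j : ℤ, Nd n a Φ (m - j) ≠ ⊥ → j ≤ k)
    {s : Fin (n + 2) → MvPolynomial (Fin 3) K}
    (hs : s ∈ Nd n a Φ (m - k)) (hs0 : s ≠ 0) {t : ℤ} (htk : t < k) :
    Module.finrank K (Nd n a Φ (m + t)) = (k + t + 2).toNat.choose 2 := by
  classical
  set W := weightedHomogeneousSubmodule K (fun _ : Fin 3 => (1 : ℤ)) (k + t) with hW
  have hmem : ∀ f : W, (f : MvPolynomial (Fin 3) K) • s ∈ Nd n a Φ (m + t) := by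
    rintro ⟨f, hf⟩
    have h1 := smul_mem_degPiece' (a := a) hf hs.1
    have e1 : (k + t) + (m - k) = m + t := by ring
    rw [e1] at h1
    refine Submodule.mem_inf.mpr ⟨h1, LinearMap.mem_ker.mpr ?_⟩
    rw [phiK_smul, LinearMap.mem_ker.mp hs.2, smul_zero]
  let μ0 : W →ₗ[K] (Fin (n + 2) → MvPolynomial (Fin 3) K) :=
    { toFun := fun f => (f : MvPolynomial (Fin 3) K) • s
      map_add' := fun f g => by
        simp only [Submodule.coe_add, add_smul]
      map_smul' := fun c f => by
        simp only [Submodule.coe_smul, smul_assoc, RingHom.id_apply] }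
  let μ : W →ₗ[K] (Nd n a Φ (m + t)) := μ0.codRestrict _ hmem
  have hbij : Function.Bijective μ := by
    constructor
    · rw [← LinearMap.ker_eq_bot, LinearMap.ker_eq_bot']
      intro f hf
      have h0 : (f : MvPolynomial (Fin 3) K) • s = 0 := congrArg Subtype.val hf
      exact Subtype.ext (smul_vec_eq_zero h0 hs0)
    · rintro ⟨u, hu⟩
      by_cases hu0 : u = 0
      · refine ⟨0, Subtype.ext ?_⟩
        show (0 : MvPolynomial (Fin 3) K) • s = u
        rw [hu0, zero_smul]
      · obtain ⟨f, g, hg, hgu⟩ := exists_dependence hΦ hfin hm htk hs hs0 hu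
        obtain ⟨h, hh⟩ := eq_smul_of_rel hk₂ hs hs0 g f u hg hgu
        obtain ⟨i0, hi0⟩ := Function.ne_iff.mp hu0
        have hui0 : u i0 = h * s i0 := congrFun hh i0
        have hh0 : h ≠ 0 := fun h0 => hi0 (by rw [hui0, h0, zero_mul]; rfl)
        have hsi0 : s i0 ≠ 0 := fun h0 => hi0 (by rw [hui0, h0, mul_zero]; rfl)
        obtain ⟨hd1, huH⟩ := homog_nonneg_degree (mem_degPiece.mp hu.1 i0) hi0
        obtain ⟨hd2, hsH⟩ := homog_nonneg_degree (mem_degPiece.mp hs.1 i0) hsi0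
        rw [hui0] at huH
        obtain ⟨ch, cs', hsum, hhH, hsH'⟩ := isHomogeneous_of_mul hh0 hsi0 huH
        have hcse : cs' = ((m - k) - a i0).toNat := hsH'.inj_right hsH hsi0
        have hhm : h ∈ W := by
          rw [hW, mem_weightedHomogeneousSubmodule]
          show homog h (k + t)
          rw [homog_iff_cases]
          right
          refine ⟨by omega, ?_⟩
          have hteq : (k + t).toNat = ch := by omega
          rw [hteq]
          exact hhH
        exact ⟨⟨h, hhm⟩, Subtype.ext hh.symm⟩
  rw [← LinearEquiv.finrank_eq (LinearEquiv.ofBijective μ hbij), hW, finrank_whs]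

end Part7

/-- If `a - b` is even (`a - b = 2m`) and `N_{m-1} ≠ 0` (the associated
normalized rank-2 bundle with `c₁ = 0` is unstable), and `k = max{ j : N_{m-j} ≠ 0 }`, then
`dim_K N_{m+t} = C(k+t+2, 2)` for every integer `t < k` (with `C(n,2) = 0` for `n < 2`). -/
theorem statement8 {K : Type*} [Field K] [IsAlgClosed K] [CharZero K]
    (n : ℕ) (a : Fin (n + 2) → ℤ) (b : Fin n → ℤ)
    (Φ : Matrix (Fin n) (Fin (n + 2)) (MvPolynomial (Fin 3) K))
    (hΦ : ∀ j i, homog (Φ j i) (a i - b j))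
    (hfin : FiniteColength n a b Φ)
    (m : ℤ) (hm : (∑ i, a i) - (∑ j, b j) = 2 * m)
    (hunstable : Nd n a Φ (m - 1) ≠ ⊥)
    (k : ℤ) (hk₁ : Nd n a Φ (m - k) ≠ ⊥) (hk₂ : ∀ j : ℤ, Nd n a Φ (m - j) ≠ ⊥ → j ≤ k) :
    ∀ t : ℤ, t < k →
      Module.finrank K (Nd n a Φ (m + t)) = Nat.choose (k + t + 2).toNat 2 := by
  intro t htk
  obtain ⟨s, hs, hs0⟩ := (Submodule.ne_bot_iff _).mp hk₁
  exact final_count hΦ hfin hm hk₂ hs hs0 htk
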